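/- For every real ν ≥ 0, every real α with |α| ≤ 1 and every real ξ > 0, one has ∑_{n=1}^∞ (ν+n) |C_n^ν(α)| n(n+2ν) φ_{ν,n}(ξ) ≤ ρ_ν ξ² 2^{2−ν} e^{3ξ} + ρ_ν (2ν+1) ξ 2^{1−ν} e^{3ξ}; in particular the series on the left converges. -/

import Mathlib

/-- For real `ν ≥ 0` and integer `n ≥ 0`, the function
`φ_{ν,n}(ξ) = ∑_{m=0}^∞ ξ^(n+2m) / (2^(ν+n+2m) Γ(m+1) Γ(ν+n+m+1))`. -/
noncomputable def phiBessel (ν : ℝ) (n : ℕ) (ξ : ℝ) : ℝ :=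
  ∑' m : ℕ, ξ ^ (n + 2 * m) /
    ((2 : ℝ) ^ (ν + n + 2 * (m : ℝ)) * Real.Gamma ((m : ℝ) + 1) * Real.Gamma (ν + n + m + 1))

/-- The Gegenbauer polynomial `C_n^ν` for `ν ≥ 0`: for `ν > 0`,
`C_n^ν(x) = (1/Γ(ν)) ∑_{m=0}^{⌊n/2⌋} (−1)^m Γ(ν+n−m) (2x)^(n−2m) / (m! (n−2m)!)`;
for `ν = 0`, `C_0^0(x) = 1` and, for `n ≥ 1`,
`C_n^0(x) = ∑_{m=0}^{⌊n/2⌋} (−1)^m Γ(n−m) (2x)^(n−2m) / (Γ(m+1) Γ(n−2m+1))`. -/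
noncomputable def gegenbauer (ν : ℝ) (n : ℕ) (x : ℝ) : ℝ :=
  if ν = 0 then
    (if n = 0 then 1 else
      ∑ m ∈ Finset.range (n / 2 + 1),
        (-1 : ℝ) ^ m * Real.Gamma ((n : ℝ) - m) * (2 * x) ^ (n - 2 * m) /
          (Real.Gamma ((m : ℝ) + 1) * Real.Gamma ((n : ℝ) - 2 * m + 1)))
  else
    (1 / Real.Gamma ν) * ∑ m ∈ Finset.range (n / 2 + 1),
      (-1 : ℝ) ^ m * Real.Gamma (ν + n - m) * (2 * x) ^ (n - 2 * m) /
        ((m.factorial : ℝ) * ((n - 2 * m).factorial : ℝ))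

/-- `ρ_0 = 1` and `ρ_ν = 1/Γ(ν)` for `ν > 0`. -/
noncomputable def rhoNu (ν : ℝ) : ℝ := if ν = 0 then 1 else 1 / Real.Gamma ν

lemma nat_choose_le_two_pow (n k : ℕ) : n.choose k ≤ 2 ^ n := by
  rcases le_or_gt k n with h | h
  · calc n.choose k ≤ ∑ i ∈ Finset.range (n+1), n.choose i :=
        Finset.single_le_sum (fun i _ => Nat.zero_le _)
          (Finset.mem_range.mpr (Nat.lt_succ_of_le h))
    _ = 2 ^ n := Nat.sum_range_choose n
  · simp [Nat.choose_eq_zero_of_lt h]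

lemma central_factorial_le (m : ℕ) :
    (2*m).factorial ≤ 2 ^ (2*m) * (m.factorial * m.factorial) := by
  have h := Nat.choose_mul_factorial_mul_factorial (show m ≤ 2*m by omega)
  have h2 : 2*m - m = m := by omega
  rw [h2] at h
  calc (2*m).factorial = (2*m).choose m * m.factorial * m.factorial := h.symm
  _ ≤ 2^(2*m) * m.factorial * m.factorial :=
      Nat.mul_le_mul_right _ (Nat.mul_le_mul_right _ (nat_choose_le_two_pow _ _))
  _ = 2^(2*m) * (m.factorial * m.factorial) := by ring

lemma sum_choose_even_le (n : ℕ) :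
    ∑ m ∈ Finset.range (n/2+1), n.choose (2*m) ≤ 2 ^ n := by
  have himg : ∑ m ∈ Finset.range (n/2+1), n.choose (2*m)
      = ∑ k ∈ (Finset.range (n/2+1)).image (fun m => 2*m), n.choose k := by
    rw [Finset.sum_image]
    intro a _ b _ hab; dsimp only at hab; omega
  rw [himg]
  calc _ ≤ ∑ k ∈ Finset.range (n+1), n.choose k := by
        apply Finset.sum_le_sum_of_subset
        intro k hk
        simp only [Finset.mem_image, Finset.mem_range] at hk ⊢
        obtain ⟨m, hm, rfl⟩ := hk; omega
  _ = 2^n := Nat.sum_range_choose n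

lemma Gamma_mul_factorial_le {x : ℝ} (hx : 1 ≤ x) (m : ℕ) :
    Real.Gamma x * m.factorial ≤ Real.Gamma (x + m) := by
  induction m with
  | zero => simp
  | succ m ih =>
    have hm0 : (0:ℝ) ≤ (m:ℝ) := Nat.cast_nonneg m
    have hpos : (0:ℝ) < x + m := by linarith
    have hΓpos : 0 < Real.Gamma (x + m) := Real.Gamma_pos_of_pos hpos
    have h1 : x + ((m:ℕ)+1 : ℕ) = (x + m) + 1 := by push_cast; ring
    rw [h1, Real.Gamma_add_one (ne_of_gt hpos)]
    have h2 : Real.Gamma x * (((m:ℕ)+1).factorial : ℝ)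
        = ((m:ℝ)+1) * (Real.Gamma x * m.factorial) := by
      rw [Nat.factorial_succ]; push_cast; ring
    rw [h2]
    calc ((m:ℝ)+1) * (Real.Gamma x * m.factorial)
        ≤ ((m:ℝ)+1) * Real.Gamma (x+m) :=
          mul_le_mul_of_nonneg_left ih (by linarith)
      _ ≤ (x+m) * Real.Gamma (x+m) :=
          mul_le_mul_of_nonneg_right (by linarith) hΓpos.le

lemma phiBessel_nonneg (ν : ℝ) (hν : 0 ≤ ν) (n : ℕ) (ξ : ℝ) (hξ : 0 ≤ ξ) :
    0 ≤ phiBessel ν n ξ := by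
  apply tsum_nonneg
  intro m
  have hn0 : (0:ℝ) ≤ (n:ℝ) := Nat.cast_nonneg n
  have hm0 : (0:ℝ) ≤ (m:ℝ) := Nat.cast_nonneg m
  have h1 : 0 < Real.Gamma ((m:ℝ)+1) := Real.Gamma_pos_of_pos (by linarith)
  have h2 : 0 < Real.Gamma (ν+(n:ℝ)+(m:ℝ)+1) := Real.Gamma_pos_of_pos (by linarith)
  have h3 : (0:ℝ) < (2:ℝ) ^ (ν + (n:ℝ) + 2*(m:ℝ)) := Real.rpow_pos_of_pos two_pos _
  positivity

lemma phiBessel_le (ν : ℝ) (hν : 0 ≤ ν) (n : ℕ) (ξ : ℝ) (hξ : 0 < ξ) :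
    phiBessel ν n ξ ≤ (ξ/2)^n * (2:ℝ)^(-ν) * Real.exp ξ / Real.Gamma (ν + n + 1) := by
  have hn0 : (0:ℝ) ≤ (n:ℝ) := Nat.cast_nonneg n
  have h2ν : (0:ℝ) < (2:ℝ)^ν := Real.rpow_pos_of_pos two_pos ν
  have hΓpos : 0 < Real.Gamma (ν + n + 1) := Real.Gamma_pos_of_pos (by linarith)
  set c : ℝ := (ξ/2)^n * (2:ℝ)^(-ν) / Real.Gamma (ν+n+1) with hc
  have hcnn : 0 ≤ c := by
    apply div_nonneg _ hΓpos.le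
    exact mul_nonneg (by positivity) (Real.rpow_nonneg (by norm_num) _)
  have hg : Summable (fun m : ℕ => ξ^(2*m) / ((2*m).factorial : ℝ)) := by
    have := (Real.summable_pow_div_factorial ξ).comp_injective
      (f := fun k : ℕ => ξ^k / (k.factorial : ℝ)) (i := fun m : ℕ => 2*m)
      (fun a b h => by dsimp at h; omega)
    exact this
  have hgle : ∑' m : ℕ, ξ^(2*m) / ((2*m).factorial : ℝ) ≤ Real.exp ξ := by
    have hexp : Real.exp ξ = ∑' k : ℕ, ξ^k / (k.factorial : ℝ) := by
      rw [Real.exp_eq_exp_ℝ, NormedSpace.exp_eq_tsum_div]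
    rw [hexp]
    exact Summable.tsum_le_tsum_of_inj (fun m => 2*m) (fun a b h => by dsimp at h; omega)
      (fun k _ => div_nonneg (pow_nonneg hξ.le k) (Nat.cast_nonneg _))
      (fun m => le_refl _) hg (Real.summable_pow_div_factorial ξ)
  have key : ∀ m : ℕ, ξ ^ (n + 2 * m) /
      ((2 : ℝ) ^ (ν + n + 2 * (m : ℝ)) * Real.Gamma ((m : ℝ) + 1) * Real.Gamma (ν + n + m + 1))
      ≤ c * (ξ^(2*m) / ((2*m).factorial : ℝ)) := by
    intro m
    have hm0 : (0:ℝ) ≤ (m:ℝ) := Nat.cast_nonneg m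
    have e1 : (2:ℝ)^(ν+(n:ℝ)+2*(m:ℝ)) = 2^ν * 2^(n:ℕ) * 2^(2*m:ℕ) := by
      rw [Real.rpow_add two_pos, Real.rpow_add two_pos, Real.rpow_natCast,
        show (2:ℝ)*(m:ℝ) = ((2*m:ℕ):ℝ) by push_cast; ring, Real.rpow_natCast]
    have e2 : Real.Gamma ((m:ℝ)+1) = (m.factorial : ℝ) := Real.Gamma_nat_eq_factorial m
    have e3 : Real.Gamma (ν+(n:ℝ)+1) * (m.factorial:ℝ) ≤ Real.Gamma (ν+(n:ℝ)+(m:ℝ)+1) := by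
      have h := Gamma_mul_factorial_le (x := ν+(n:ℝ)+1) (by linarith) m
      have harg : ν+(n:ℝ)+1+(m:ℝ) = ν+(n:ℝ)+(m:ℝ)+1 := by ring
      rwa [harg] at h
    have hΓm : (0:ℝ) < (m.factorial : ℝ) := by exact_mod_cast m.factorial_pos
    have hΓnm : 0 < Real.Gamma (ν+(n:ℝ)+(m:ℝ)+1) := Real.Gamma_pos_of_pos (by linarith)
    have hCB : ((2*m).factorial : ℝ) ≤ 2^(2*m) * ((m.factorial:ℝ) * (m.factorial:ℝ)) := by
      exact_mod_cast central_factorial_le m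
    have hceq : c * (ξ^(2*m) / ((2*m).factorial : ℝ))
        = ξ^(n+2*m) / (2^ν * 2^(n:ℕ) * Real.Gamma (ν+n+1) * ((2*m).factorial : ℝ)) := by
      rw [hc, Real.rpow_neg (by norm_num : (0:ℝ) ≤ 2), pow_add, div_pow]
      have h2mf : ((2*m).factorial : ℝ) ≠ 0 := by exact_mod_cast (2*m).factorial_pos.ne'
      field_simp [h2ν.ne', hΓpos.ne', h2mf]
    rw [e1, e2, hceq]
    have hD2pos : (0:ℝ) < 2^ν * 2^(n:ℕ) * Real.Gamma (ν+n+1) * ((2*m).factorial : ℝ) := by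
      positivity
    have hD2le : 2^ν * 2^(n:ℕ) * Real.Gamma (ν+n+1) * ((2*m).factorial : ℝ)
        ≤ 2^ν * 2^(n:ℕ) * 2^(2*m:ℕ) * (m.factorial:ℝ) * Real.Gamma (ν+n+m+1) := by
      calc 2^ν * 2^(n:ℕ) * Real.Gamma (ν+(n:ℝ)+1) * ((2*m).factorial : ℝ)
          ≤ 2^ν * 2^(n:ℕ) * Real.Gamma (ν+(n:ℝ)+1) * (2^(2*m) * ((m.factorial:ℝ) * (m.factorial:ℝ))) := by
            apply mul_le_mul_of_nonneg_left hCB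
            exact mul_nonneg (by positivity) hΓpos.le
        _ = 2^ν * 2^(n:ℕ) * 2^(2*m:ℕ) * (m.factorial:ℝ) * (Real.Gamma (ν+(n:ℝ)+1) * (m.factorial:ℝ)) := by
            ring
        _ ≤ 2^ν * 2^(n:ℕ) * 2^(2*m:ℕ) * (m.factorial:ℝ) * Real.Gamma (ν+(n:ℝ)+(m:ℝ)+1) := by
            apply mul_le_mul_of_nonneg_left e3 (by positivity)
    exact div_le_div_of_nonneg_left (pow_nonneg hξ.le _) hD2pos hD2le
  have hbsum : Summable (fun m : ℕ => c * (ξ^(2*m) / ((2*m).factorial : ℝ))) := hg.mul_left c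
  have hasum : Summable (fun m : ℕ => ξ ^ (n + 2 * m) /
      ((2 : ℝ) ^ (ν + n + 2 * (m : ℝ)) * Real.Gamma ((m : ℝ) + 1) * Real.Gamma (ν + n + m + 1))) := by
    apply Summable.of_nonneg_of_le _ key hbsum
    intro m
    have hm0 : (0:ℝ) ≤ (m:ℝ) := Nat.cast_nonneg m
    have h1 : 0 < Real.Gamma ((m:ℝ)+1) := Real.Gamma_pos_of_pos (by linarith)
    have h2 : 0 < Real.Gamma (ν+(n:ℝ)+(m:ℝ)+1) := Real.Gamma_pos_of_pos (by linarith)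
    have h3 : (0:ℝ) < (2:ℝ) ^ (ν + (n:ℝ) + 2*(m:ℝ)) := Real.rpow_pos_of_pos two_pos _
    positivity
  calc phiBessel ν n ξ ≤ ∑' m : ℕ, c * (ξ^(2*m) / ((2*m).factorial : ℝ)) :=
        Summable.tsum_le_tsum key hasum hbsum
    _ = c * ∑' m : ℕ, ξ^(2*m) / ((2*m).factorial : ℝ) := tsum_mul_left
    _ ≤ c * Real.exp ξ := mul_le_mul_of_nonneg_left hgle hcnn
    _ = (ξ/2)^n * (2:ℝ)^(-ν) * Real.exp ξ / Real.Gamma (ν + n + 1) := by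
        rw [hc]; ring

lemma rhoNu_pos (ν : ℝ) (hν : 0 ≤ ν) : 0 < rhoNu ν := by
  unfold rhoNu
  split_ifs with h
  · norm_num
  · have h1 : 0 < ν := lt_of_le_of_ne hν (Ne.symm h)
    have h2 := Real.Gamma_pos_of_pos h1
    positivity

lemma range_facts {n m : ℕ} (hn : 1 ≤ n) (hm : m ∈ Finset.range (n/2+1)) :
    2*m ≤ n ∧ m + 1 ≤ n := by
  simp only [Finset.mem_range] at hm
  omega

lemma gegenbauer_abs_le (ν : ℝ) (hν : 0 ≤ ν) (n : ℕ) (hn : 1 ≤ n) (α : ℝ) (hα : |α| ≤ 1) :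
    |gegenbauer ν n α| ≤ rhoNu ν * ∑ m ∈ Finset.range (n/2+1),
      Real.Gamma (ν + n - m) * 2^(n - 2*m) / ((m.factorial : ℝ) * ((n - 2*m).factorial : ℝ)) := by
  have h2α : |2*α| ≤ 2 := by
    rw [abs_mul, abs_two]; linarith
  rcases eq_or_ne ν 0 with rfl | hν0
  · rw [rhoNu, if_pos rfl, one_mul, gegenbauer, if_pos rfl, if_neg (by omega : n ≠ 0)]
    refine (Finset.abs_sum_le_sum_abs _ _).trans (Finset.sum_le_sum ?_)
    intro m hm
    obtain ⟨h2m, hm1⟩ := range_facts hn hm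
    have hm1' : (m:ℝ)+1 ≤ (n:ℝ) := by exact_mod_cast hm1
    have e2 : Real.Gamma ((m:ℝ)+1) = (m.factorial:ℝ) := Real.Gamma_nat_eq_factorial m
    have ecast : (n:ℝ) - 2*(m:ℝ) = ((n - 2*m : ℕ):ℝ) := by
      rw [Nat.cast_sub h2m]; push_cast; ring
    have e3 : Real.Gamma ((n:ℝ) - 2*(m:ℝ) + 1) = ((n-2*m).factorial : ℝ) := by
      rw [ecast]; exact Real.Gamma_nat_eq_factorial _
    have hΓpos : 0 < Real.Gamma ((n:ℝ) - (m:ℝ)) := Real.Gamma_pos_of_pos (by linarith)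
    have hD : (0:ℝ) < (m.factorial:ℝ) * ((n-2*m).factorial:ℝ) :=
      mul_pos (by exact_mod_cast m.factorial_pos) (by exact_mod_cast (n-2*m).factorial_pos)
    rw [e2, e3, abs_div, abs_mul, abs_mul, abs_pow, abs_neg, abs_one, one_pow, one_mul,
      abs_of_pos hΓpos, abs_of_pos hD, abs_pow, zero_add]
    apply (div_le_div_iff_of_pos_right hD).mpr
    exact mul_le_mul_of_nonneg_left (pow_le_pow_left₀ (abs_nonneg _) h2α _) hΓpos.le
  · have hνpos : 0 < ν := lt_of_le_of_ne hν (Ne.symm hν0)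
    have hΓν : 0 < Real.Gamma ν := Real.Gamma_pos_of_pos hνpos
    rw [rhoNu, if_neg hν0, gegenbauer, if_neg hν0, abs_mul,
      abs_of_pos (by positivity : (0:ℝ) < 1/Real.Gamma ν)]
    apply mul_le_mul_of_nonneg_left _ (by positivity)
    refine (Finset.abs_sum_le_sum_abs _ _).trans (Finset.sum_le_sum ?_)
    intro m hm
    obtain ⟨h2m, hm1⟩ := range_facts hn hm
    have hm1' : (m:ℝ)+1 ≤ (n:ℝ) := by exact_mod_cast hm1
    have hΓpos : 0 < Real.Gamma (ν + (n:ℝ) - (m:ℝ)) := Real.Gamma_pos_of_pos (by linarith)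
    have hD : (0:ℝ) < (m.factorial:ℝ) * ((n-2*m).factorial:ℝ) :=
      mul_pos (by exact_mod_cast m.factorial_pos) (by exact_mod_cast (n-2*m).factorial_pos)
    rw [abs_div, abs_mul, abs_mul, abs_pow, abs_neg, abs_one, one_pow, one_mul,
      abs_of_pos hΓpos, abs_of_pos hD, abs_pow]
    apply (div_le_div_iff_of_pos_right hD).mpr
    exact mul_le_mul_of_nonneg_left (pow_le_pow_left₀ (abs_nonneg _) h2α _) hΓpos.le

lemma sum_bound (ν : ℝ) (hν : 0 ≤ ν) (n : ℕ) (hn : 1 ≤ n) :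
    (ν+(n:ℝ)) * ∑ m ∈ Finset.range (n/2+1),
      Real.Gamma (ν+(n:ℝ)-(m:ℝ)) * 2^(n-2*m) / ((m.factorial:ℝ) * ((n-2*m).factorial:ℝ))
    ≤ Real.Gamma (ν+(n:ℝ)+1) * 4^n / (n.factorial : ℝ) := by
  have hn1 : (1:ℝ) ≤ (n:ℝ) := by exact_mod_cast hn
  have hνn : (0:ℝ) < ν + n := by linarith
  have hΓB : 0 < Real.Gamma (ν+(n:ℝ)+1) := Real.Gamma_pos_of_pos (by linarith)
  have hnf : (0:ℝ) < (n.factorial:ℝ) := by exact_mod_cast n.factorial_pos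
  rw [Finset.mul_sum]
  have step1 : ∀ m ∈ Finset.range (n/2+1),
      (ν+(n:ℝ)) * (Real.Gamma (ν+(n:ℝ)-(m:ℝ)) * 2^(n-2*m) / ((m.factorial:ℝ) * ((n-2*m).factorial:ℝ)))
      ≤ Real.Gamma (ν+(n:ℝ)+1) * (2^n * (n.choose (2*m) : ℝ)) / (n.factorial:ℝ) := by
    intro m hm
    obtain ⟨h2m, hm1⟩ := range_facts hn hm
    have hm1' : (m:ℝ)+1 ≤ (n:ℝ) := by exact_mod_cast hm1
    have hx1 : (1:ℝ) ≤ ν+(n:ℝ)-(m:ℝ) := by linarith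
    have hΓA : 0 < Real.Gamma (ν+(n:ℝ)-(m:ℝ)) := Real.Gamma_pos_of_pos (by linarith)
    have hmf : (0:ℝ) < (m.factorial:ℝ) := by exact_mod_cast m.factorial_pos
    have hnmf : (0:ℝ) < ((n-2*m).factorial:ℝ) := by exact_mod_cast (n-2*m).factorial_pos
    have F1 : (ν+(n:ℝ)) * Real.Gamma (ν+(n:ℝ)-(m:ℝ)) * (m.factorial:ℝ)
        ≤ Real.Gamma (ν+(n:ℝ)+1) := by
      have hb := Gamma_mul_factorial_le hx1 m
      have harg : ν+(n:ℝ)-(m:ℝ)+(m:ℝ) = ν+(n:ℝ) := by ring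
      rw [harg] at hb
      have hΓ1 : Real.Gamma (ν+(n:ℝ)+1) = (ν+(n:ℝ)) * Real.Gamma (ν+(n:ℝ)) :=
        Real.Gamma_add_one hνn.ne'
      calc (ν+(n:ℝ)) * Real.Gamma (ν+(n:ℝ)-(m:ℝ)) * (m.factorial:ℝ)
          = (ν+(n:ℝ)) * (Real.Gamma (ν+(n:ℝ)-(m:ℝ)) * (m.factorial:ℝ)) := by ring
        _ ≤ (ν+(n:ℝ)) * Real.Gamma (ν+(n:ℝ)) := mul_le_mul_of_nonneg_left hb hνn.le
        _ = Real.Gamma (ν+(n:ℝ)+1) := hΓ1.symm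
    have hchoose : (n.factorial:ℝ)
        = (n.choose (2*m) : ℝ) * ((2*m).factorial:ℝ) * ((n-2*m).factorial:ℝ) := by
      exact_mod_cast (congrArg (Nat.cast (R := ℝ))
        (Nat.choose_mul_factorial_mul_factorial h2m)).symm
    have hCB : ((2*m).factorial : ℝ) ≤ 2^(2*m) * ((m.factorial:ℝ) * (m.factorial:ℝ)) := by
      exact_mod_cast central_factorial_le m
    have hpow2 : (2:ℝ)^(n-2*m) * 2^(2*m) = 2^n := by
      rw [← pow_add]; congr 1; omega
    have C : (2:ℝ)^(n-2*m) * (n.factorial:ℝ)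
        ≤ 2^n * (n.choose (2*m):ℝ) * ((m.factorial:ℝ)*(m.factorial:ℝ)*((n-2*m).factorial:ℝ)) := by
      calc (2:ℝ)^(n-2*m) * (n.factorial:ℝ)
          = (n.choose (2*m):ℝ) * ((n-2*m).factorial:ℝ) * ((2:ℝ)^(n-2*m) * ((2*m).factorial:ℝ)) := by
            rw [hchoose]; ring
        _ ≤ (n.choose (2*m):ℝ) * ((n-2*m).factorial:ℝ)
              * ((2:ℝ)^(n-2*m) * (2^(2*m) * ((m.factorial:ℝ)*(m.factorial:ℝ)))) := by
            apply mul_le_mul_of_nonneg_left _ (by positivity)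
            exact mul_le_mul_of_nonneg_left hCB (by positivity)
        _ = 2^n * (n.choose (2*m):ℝ) * ((m.factorial:ℝ)*(m.factorial:ℝ)*((n-2*m).factorial:ℝ)) := by
            rw [← hpow2]; ring
    rw [mul_div_assoc', div_le_div_iff₀ (mul_pos hmf hnmf) hnf]
    apply le_of_mul_le_mul_right _ hmf
    calc (ν+(n:ℝ)) * (Real.Gamma (ν+(n:ℝ)-(m:ℝ)) * 2^(n-2*m)) * (n.factorial:ℝ) * (m.factorial:ℝ)
        = ((ν+(n:ℝ)) * Real.Gamma (ν+(n:ℝ)-(m:ℝ)) * (m.factorial:ℝ))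
            * ((2:ℝ)^(n-2*m) * (n.factorial:ℝ)) := by ring
      _ ≤ Real.Gamma (ν+(n:ℝ)+1)
            * (2^n * (n.choose (2*m):ℝ) * ((m.factorial:ℝ)*(m.factorial:ℝ)*((n-2*m).factorial:ℝ))) := by
          apply mul_le_mul F1 C (by positivity) hΓB.le
      _ = Real.Gamma (ν+(n:ℝ)+1) * (2^n * (n.choose (2*m):ℝ))
            * ((m.factorial:ℝ) * ((n-2*m).factorial:ℝ)) * (m.factorial:ℝ) := by ring
  calc ∑ m ∈ Finset.range (n/2+1), (ν+(n:ℝ)) *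
        (Real.Gamma (ν+(n:ℝ)-(m:ℝ)) * 2^(n-2*m) / ((m.factorial:ℝ) * ((n-2*m).factorial:ℝ)))
      ≤ ∑ m ∈ Finset.range (n/2+1),
          Real.Gamma (ν+(n:ℝ)+1) * (2^n * (n.choose (2*m) : ℝ)) / (n.factorial:ℝ) :=
        Finset.sum_le_sum step1
    _ = Real.Gamma (ν+(n:ℝ)+1) * 2^n / (n.factorial:ℝ)
          * ∑ m ∈ Finset.range (n/2+1), (n.choose (2*m) : ℝ) := by
        rw [Finset.mul_sum]
        apply Finset.sum_congr rfl
        intro m _; ring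
    _ ≤ Real.Gamma (ν+(n:ℝ)+1) * 2^n / (n.factorial:ℝ) * 2^n := by
        apply mul_le_mul_of_nonneg_left _
          (div_nonneg (mul_nonneg hΓB.le (by positivity)) hnf.le)
        have h := sum_choose_even_le n
        calc ∑ m ∈ Finset.range (n/2+1), (n.choose (2*m) : ℝ)
            = ((∑ m ∈ Finset.range (n/2+1), n.choose (2*m) : ℕ):ℝ) := by push_cast; rfl
          _ ≤ ((2^n : ℕ):ℝ) := by exact_mod_cast h
          _ = 2^n := by push_cast; rfl
    _ = Real.Gamma (ν+(n:ℝ)+1) * 4^n / (n.factorial : ℝ) := by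
        rw [show (4:ℝ)^n = 2^n*2^n by rw [← mul_pow]; norm_num]; ring

lemma exp_series_aux (x : ℝ) (c : ℝ) :
    Summable (fun n : ℕ => ((n:ℝ) + c) * x^n / (n.factorial : ℝ)) ∧
    ∑' n : ℕ, ((n:ℝ) + c) * x^n / (n.factorial : ℝ)
      = x * Real.exp x + c * Real.exp x := by
  have hf : Summable (fun n : ℕ => x^n / (n.factorial : ℝ)) :=
    Real.summable_pow_div_factorial x
  have hfs : ∑' n : ℕ, x^n / (n.factorial : ℝ) = Real.exp x := by
    rw [Real.exp_eq_exp_ℝ, NormedSpace.exp_eq_tsum_div]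
  set w : ℕ → ℝ := fun n => (n:ℝ) * x^n / (n.factorial : ℝ) with hw
  have hwsucc : ∀ n : ℕ, w (n+1) = x * (x^n / (n.factorial : ℝ)) := by
    intro n
    have hnf : ((n.factorial : ℕ):ℝ) ≠ 0 := by exact_mod_cast n.factorial_pos.ne'
    simp only [hw]
    rw [Nat.factorial_succ]
    push_cast
    rw [pow_succ]
    field_simp
  have hw1 : Summable (fun n => w (n+1)) := by
    simp only [hwsucc]
    exact hf.mul_left x
  have hwsum : Summable w := (summable_nat_add_iff 1).mp hw1
  have hwt : ∑' n, w n = x * Real.exp x := by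
    rw [Summable.tsum_eq_zero_add hwsum]
    simp only [hwsucc]
    rw [tsum_mul_left, hfs]
    simp [hw]
  have heq : ∀ n : ℕ, ((n:ℝ)+c) * x^n / (n.factorial : ℝ)
      = w n + c * (x^n / (n.factorial : ℝ)) := by
    intro n; simp only [hw]; ring
  constructor
  · have : Summable (fun n : ℕ => w n + c * (x^n / (n.factorial : ℝ))) :=
      hwsum.add (hf.mul_left c)
    apply this.congr
    intro n
    exact (heq n).symm
  · rw [tsum_congr heq, Summable.tsum_add hwsum (hf.mul_left c), hwt, tsum_mul_left, hfs]

lemma term_le (ν : ℝ) (hν : 0 ≤ ν) (α : ℝ) (hα : |α| ≤ 1) (ξ : ℝ) (hξ : 0 < ξ)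
    (n : ℕ) (hn : 1 ≤ n) :
    (ν + (n:ℝ)) * |gegenbauer ν n α| * ((n:ℝ) * ((n:ℝ) + 2*ν)) * phiBessel ν n ξ ≤
      rhoNu ν * (2:ℝ)^(-ν) * Real.exp ξ
        * ((n:ℝ) * ((n:ℝ) + 2*ν) * (2*ξ)^n / (n.factorial:ℝ)) := by
  have hn1 : (1:ℝ) ≤ (n:ℝ) := by exact_mod_cast hn
  have hνn : (0:ℝ) ≤ ν + n := by linarith
  have hB : (0:ℝ) ≤ (n:ℝ) * ((n:ℝ) + 2*ν) := mul_nonneg (by linarith) (by linarith)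
  have hΓB : 0 < Real.Gamma (ν+(n:ℝ)+1) := Real.Gamma_pos_of_pos (by linarith)
  have hφnn := phiBessel_nonneg ν hν n ξ hξ.le
  have hG := gegenbauer_abs_le ν hν n hn α hα
  have hφ := phiBessel_le ν hν n ξ hξ
  have hS := sum_bound ν hν n hn
  have hρS : 0 ≤ rhoNu ν * ∑ m ∈ Finset.range (n/2+1),
      Real.Gamma (ν+(n:ℝ)-(m:ℝ)) * 2^(n-2*m) / ((m.factorial:ℝ) * ((n-2*m).factorial:ℝ)) :=
    le_trans (abs_nonneg _) hG
  have hφbnn : (0:ℝ) ≤ (ξ/2)^n * (2:ℝ)^(-ν) * Real.exp ξ / Real.Gamma (ν+(n:ℝ)+1) :=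
    div_nonneg (mul_nonneg (mul_nonneg (pow_nonneg (by linarith) n)
      (Real.rpow_nonneg (by norm_num) _)) (Real.exp_pos ξ).le) hΓB.le
  have hconstnn : (0:ℝ) ≤ rhoNu ν * ((n:ℝ)*((n:ℝ)+2*ν)) * ((ξ/2)^n * (2:ℝ)^(-ν) * Real.exp ξ)
      / Real.Gamma (ν+(n:ℝ)+1) :=
    div_nonneg (mul_nonneg (mul_nonneg (rhoNu_pos ν hν).le hB)
      (mul_nonneg (mul_nonneg (pow_nonneg (by linarith) n)
        (Real.rpow_nonneg (by norm_num) _)) (Real.exp_pos ξ).le)) hΓB.le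
  calc (ν + (n:ℝ)) * |gegenbauer ν n α| * ((n:ℝ) * ((n:ℝ) + 2*ν)) * phiBessel ν n ξ
      ≤ (ν + (n:ℝ)) * (rhoNu ν * ∑ m ∈ Finset.range (n/2+1),
          Real.Gamma (ν+(n:ℝ)-(m:ℝ)) * 2^(n-2*m) / ((m.factorial:ℝ) * ((n-2*m).factorial:ℝ)))
          * ((n:ℝ) * ((n:ℝ) + 2*ν)) * phiBessel ν n ξ := by
        apply mul_le_mul_of_nonneg_right _ hφnn
        apply mul_le_mul_of_nonneg_right _ hB
        exact mul_le_mul_of_nonneg_left hG hνn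
    _ ≤ (ν + (n:ℝ)) * (rhoNu ν * ∑ m ∈ Finset.range (n/2+1),
          Real.Gamma (ν+(n:ℝ)-(m:ℝ)) * 2^(n-2*m) / ((m.factorial:ℝ) * ((n-2*m).factorial:ℝ)))
          * ((n:ℝ) * ((n:ℝ) + 2*ν))
          * ((ξ/2)^n * (2:ℝ)^(-ν) * Real.exp ξ / Real.Gamma (ν+(n:ℝ)+1)) := by
        apply mul_le_mul_of_nonneg_left hφ
        exact mul_nonneg (mul_nonneg hνn hρS) hB
    _ = (rhoNu ν * ((n:ℝ)*((n:ℝ)+2*ν)) * ((ξ/2)^n * (2:ℝ)^(-ν) * Real.exp ξ)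
          / Real.Gamma (ν+(n:ℝ)+1))
          * ((ν+(n:ℝ)) * ∑ m ∈ Finset.range (n/2+1),
            Real.Gamma (ν+(n:ℝ)-(m:ℝ)) * 2^(n-2*m) / ((m.factorial:ℝ) * ((n-2*m).factorial:ℝ))) := by
        ring
    _ ≤ (rhoNu ν * ((n:ℝ)*((n:ℝ)+2*ν)) * ((ξ/2)^n * (2:ℝ)^(-ν) * Real.exp ξ)
          / Real.Gamma (ν+(n:ℝ)+1))
          * (Real.Gamma (ν+(n:ℝ)+1) * 4^n / (n.factorial : ℝ)) :=
        mul_le_mul_of_nonneg_left hS hconstnn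
    _ = rhoNu ν * (2:ℝ)^(-ν) * Real.exp ξ
          * ((n:ℝ) * ((n:ℝ) + 2*ν) * (2*ξ)^n / (n.factorial:ℝ)) := by
        have hc : (ξ/2)^n * (4:ℝ)^n = (2*ξ)^n := by
          rw [← mul_pow]; congr 1; ring
        have hnf : (0:ℝ) < (n.factorial:ℝ) := by exact_mod_cast n.factorial_pos
        rw [← hc]
        field_simp [hΓB.ne']


/-- For every real `ν ≥ 0`, every real `α` with `|α| ≤ 1` and every real `ξ > 0`,
the series `∑_{n=1}^∞ (ν+n) |C_n^ν(α)| n(n+2ν) φ_{ν,n}(ξ)` converges and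
`∑_{n=1}^∞ (ν+n) |C_n^ν(α)| n(n+2ν) φ_{ν,n}(ξ)
  ≤ ρ_ν ξ² 2^(2−ν) e^(3ξ) + ρ_ν (2ν+1) ξ 2^(1−ν) e^(3ξ)`. -/
theorem gegenbauer_phi_series_bound (ν : ℝ) (hν : 0 ≤ ν) (α : ℝ) (hα : |α| ≤ 1)
    (ξ : ℝ) (hξ : 0 < ξ) :
    Summable (fun n : ℕ => (ν + ((n + 1 : ℕ) : ℝ)) * |gegenbauer ν (n + 1) α| *
      (((n + 1 : ℕ) : ℝ) * (((n + 1 : ℕ) : ℝ) + 2 * ν)) * phiBessel ν (n + 1) ξ) ∧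
    ∑' n : ℕ, (ν + ((n + 1 : ℕ) : ℝ)) * |gegenbauer ν (n + 1) α| *
        (((n + 1 : ℕ) : ℝ) * (((n + 1 : ℕ) : ℝ) + 2 * ν)) * phiBessel ν (n + 1) ξ ≤
      rhoNu ν * ξ ^ 2 * (2 : ℝ) ^ (2 - ν) * Real.exp (3 * ξ) +
        rhoNu ν * (2 * ν + 1) * ξ * (2 : ℝ) ^ (1 - ν) * Real.exp (3 * ξ) := by
  have hρ := rhoNu_pos ν hν
  obtain ⟨hsum, htsum⟩ := exp_series_aux (2*ξ) (2*ν+1)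
  set K := rhoNu ν * (2:ℝ)^(-ν) * Real.exp ξ * (2*ξ) with hK
  have hterm : ∀ n : ℕ, (ν + ((n + 1 : ℕ) : ℝ)) * |gegenbauer ν (n + 1) α| *
      (((n + 1 : ℕ) : ℝ) * (((n + 1 : ℕ) : ℝ) + 2 * ν)) * phiBessel ν (n + 1) ξ
      ≤ K * (((n:ℝ) + (2*ν+1)) * (2*ξ)^n / (n.factorial:ℝ)) := by
    intro n
    refine (term_le ν hν α hα ξ hξ (n+1) (by omega)).trans_eq ?_
    have hnf : (0:ℝ) < (n.factorial:ℝ) := by exact_mod_cast n.factorial_pos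
    have h1 : ((n:ℝ)+1) ≠ 0 := by positivity
    rw [hK, Nat.factorial_succ]
    push_cast
    rw [pow_succ]
    field_simp
    ring
  have hnn : ∀ n : ℕ, 0 ≤ (ν + ((n + 1 : ℕ) : ℝ)) * |gegenbauer ν (n + 1) α| *
      (((n + 1 : ℕ) : ℝ) * (((n + 1 : ℕ) : ℝ) + 2 * ν)) * phiBessel ν (n + 1) ξ := by
    intro n
    have h1 : (0:ℝ) ≤ ((n+1:ℕ):ℝ) := Nat.cast_nonneg _
    apply mul_nonneg
    · apply mul_nonneg
      · exact mul_nonneg (by push_cast; linarith) (abs_nonneg _)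
      · exact mul_nonneg h1 (by push_cast; linarith)
    · exact phiBessel_nonneg ν hν _ ξ hξ.le
  have hDsum : Summable (fun n : ℕ => K * (((n:ℝ) + (2*ν+1)) * (2*ξ)^n / (n.factorial:ℝ))) :=
    hsum.mul_left K
  have hSsum : Summable (fun n : ℕ => (ν + ((n + 1 : ℕ) : ℝ)) * |gegenbauer ν (n + 1) α| *
      (((n + 1 : ℕ) : ℝ) * (((n + 1 : ℕ) : ℝ) + 2 * ν)) * phiBessel ν (n + 1) ξ) :=
    Summable.of_nonneg_of_le hnn hterm hDsum
  refine ⟨hSsum, ?_⟩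
  calc ∑' n : ℕ, (ν + ((n + 1 : ℕ) : ℝ)) * |gegenbauer ν (n + 1) α| *
        (((n + 1 : ℕ) : ℝ) * (((n + 1 : ℕ) : ℝ) + 2 * ν)) * phiBessel ν (n + 1) ξ
      ≤ ∑' n : ℕ, K * (((n:ℝ) + (2*ν+1)) * (2*ξ)^n / (n.factorial:ℝ)) :=
        Summable.tsum_le_tsum hterm hSsum hDsum
    _ = K * (2*ξ*Real.exp (2*ξ) + (2*ν+1)*Real.exp (2*ξ)) := by
        rw [tsum_mul_left, htsum]
    _ = rhoNu ν * ξ ^ 2 * (2 : ℝ) ^ (2 - ν) * Real.exp (3 * ξ) +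
        rhoNu ν * (2 * ν + 1) * ξ * (2 : ℝ) ^ (1 - ν) * Real.exp (3 * ξ) := by
        rw [hK, show Real.exp (3*ξ) = Real.exp ξ * Real.exp (2*ξ) from by
            rw [show (3:ℝ)*ξ = ξ + 2*ξ by ring, Real.exp_add],
          show (2:ℝ)^((2:ℝ)-ν) = 4*(2:ℝ)^(-ν) from by
            rw [show (2:ℝ)-ν = 2+(-ν) by ring, Real.rpow_add two_pos]
            norm_num,
          show (2:ℝ)^((1:ℝ)-ν) = 2*(2:ℝ)^(-ν) from by
            rw [show (1:ℝ)-ν = 1+(-ν) by ring, Real.rpow_add two_pos]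
            norm_num]
        ring
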